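/- Under the map ψ from Łukasiewicz paths to Motzkin paths, the positions of flat steps at height 0 in L coincide with the positions of flat steps at height 0 in ψ(L), and the number of up steps (of any size k ≥ 1) in L equals the number of up steps U in ψ(L). -/

import Mathlib

/-- A Łukasiewicz path: vertical step components, each `≥ -1`, all partial sums
nonnegative, total sum `0`. -/
def IsLukas (w : List ℤ) : Prop :=
  (∀ s ∈ w, -1 ≤ s) ∧ (∀ k, 0 ≤ (w.take k).sum) ∧ w.sum = 0

/-- `ψ` satisfies the defining recursive equations: `ψ(ε) = ε`,
`ψ(F L) = F ψ(L)`, and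
`ψ(U_k L₁ D L₂ D … L_k D L) = U ψ(L₁) F ψ(L₂) F … ψ(L_k) D ψ(L)`. -/
def PsiEquations (ψ : List ℤ → List ℤ) : Prop :=
  ψ [] = [] ∧
  (∀ L : List ℤ, IsLukas L → ψ (0 :: L) = 0 :: ψ L) ∧
  (∀ (Ls : List (List ℤ)) (L : List ℤ), Ls ≠ [] →
    (∀ M ∈ Ls, IsLukas M) → IsLukas L →
    ψ ((Ls.length : ℤ) :: ((Ls.map fun M => M ++ [(-1 : ℤ)]).flatten ++ L)) =
      1 :: ((List.intersperse [(0 : ℤ)] (Ls.map ψ)).flatten ++ (-1 : ℤ) :: ψ L))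

lemma lukas_decomp : ∀ (n : ℕ) (w : List ℤ), (∀ s ∈ w, -1 ≤ s) →
    (∀ j, -(n : ℤ) ≤ (w.take j).sum) → w.sum = -(n : ℤ) →
    ∃ (Ls : List (List ℤ)) (L₀ : List ℤ), Ls.length = n ∧ (∀ M ∈ Ls, IsLukas M) ∧
      IsLukas L₀ ∧ w = (Ls.map fun M => M ++ [(-1 : ℤ)]).flatten ++ L₀ := by
  intro n
  induction n with
  | zero =>
    intro w h1 h2 h3
    exact ⟨[], w, rfl, by simp, ⟨h1, fun j => by simpa using h2 j, by simpa using h3⟩, by simp⟩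
  | succ n ih =>
    intro w h1 h2 h3
    have hex : ∃ j, (w.take j).sum < 0 := ⟨w.length, by simp [h3]; omega⟩
    set m := Nat.find hex with hmdef
    have hm : (w.take m).sum < 0 := Nat.find_spec hex
    have hmin : ∀ j < m, 0 ≤ (w.take j).sum := by
      intro j hj
      have := Nat.find_min hex hj
      omega
    have hm0 : m ≠ 0 := by
      intro h; rw [h] at hm; simp at hm
    clear hmdef
    clear_value m
    obtain ⟨i, rfl⟩ : ∃ i, m = i + 1 := ⟨m - 1, by omega⟩
    have hilen : i < w.length := by
      by_contra hc
      push_neg at hc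
      have h4 : w.take i = w := List.take_of_length_le hc
      have := hmin i (by omega)
      rw [h4, h3] at this
      omega
    have htake : w.take (i + 1) = w.take i ++ [w[i]] := by
      rw [List.take_succ]; simp [List.getElem?_eq_getElem hilen]
    have hgi : -1 ≤ w[i] := h1 _ (List.getElem_mem hilen)
    have hs0 : 0 ≤ (w.take i).sum := hmin i (by omega)
    have hsum1 : (w.take (i+1)).sum = (w.take i).sum + w[i] := by
      rw [htake, List.sum_append]; simp
    have hkey : (w.take i).sum = 0 ∧ w[i] = -1 := by constructor <;> omega
    set w' := w.drop (i+1) with hw'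
    have hsplit : w = w.take i ++ (-1 :: w') := by
      conv_lhs => rw [← List.take_append_drop i w]
      rw [List.drop_eq_getElem_cons hilen, hkey.2]
    have htm : (w.take (i+1)).sum = -1 := by omega
    have hw'mem : ∀ s ∈ w', -1 ≤ s := fun s hs => h1 s (List.mem_of_mem_drop hs)
    have hw'take : ∀ j, -(n : ℤ) ≤ (w'.take j).sum := by
      intro j
      have ha : List.take (i + 1 + j) w = List.take (i+1) w ++ List.take j (List.drop (i+1) w) := List.take_add ..
      have := h2 (i + 1 + j)
      rw [ha, List.sum_append] at this
      rw [← hw'] at this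
      push_cast at this ⊢
      omega
    have hw'sum : w'.sum = -(n : ℤ) := by
      have : w.sum = (w.take (i+1)).sum + w'.sum := by
        conv_lhs => rw [← List.take_append_drop (i+1) w]
        rw [List.sum_append]
      rw [h3] at this
      push_cast at this ⊢
      omega
    obtain ⟨Ls, L₀, hlen, hmem, hL₀, heq⟩ := ih w' hw'mem hw'take hw'sum
    refine ⟨w.take i :: Ls, L₀, by simp [hlen], ?_, hL₀, ?_⟩
    · rintro M hM
      rcases List.mem_cons.mp hM with rfl | hM
      · refine ⟨fun s hs => h1 s (List.mem_of_mem_take hs), ?_, hkey.1⟩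
        intro j
        rw [List.take_take]
        exact hmin _ (by omega)
      · exact hmem M hM
    · conv_lhs => rw [hsplit]
      simp [← heq]

lemma A_len (Ls : List (List ℤ)) :
    ((Ls.map fun M => M ++ [(-1 : ℤ)]).flatten).length = (Ls.map List.length).sum + Ls.length := by
  induction Ls with
  | nil => simp
  | cons x tl ih => simp [ih]; omega

lemma A_sum (Ls : List (List ℤ)) (h : ∀ M ∈ Ls, M.sum = 0) :
    ((Ls.map fun M => M ++ [(-1 : ℤ)]).flatten).sum = -(Ls.length : ℤ) := by
  induction Ls with
  | nil => simp
  | cons x tl ih =>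
    simp only [List.map_cons, List.flatten_cons, List.sum_append]
    rw [ih (fun M hM => h M (List.mem_cons_of_mem _ hM)), h x (List.mem_cons_self)]
    simp only [List.sum_cons, List.sum_nil, List.length_cons]
    push_cast
    ring

lemma A_countP (Ls : List (List ℤ)) :
    ((Ls.map fun M => M ++ [(-1 : ℤ)]).flatten).countP (fun s => 1 ≤ s) =
      (Ls.map (List.countP fun s => 1 ≤ s)).sum := by
  induction Ls with
  | nil => simp
  | cons x tl ih =>
    simp only [List.map_cons, List.flatten_cons, List.countP_append, List.sum_cons, ih]
    have : List.countP (fun s => decide (1 ≤ s)) [(-1 : ℤ)] = 0 := by decide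
    simp only [this]
    omega

lemma A_prefix (Ls : List (List ℤ))
    (h : ∀ M ∈ Ls, M.sum = 0 ∧ ∀ j, 0 ≤ (M.take j).sum) : ∀ t,
    (-(Ls.length : ℤ) ≤ (((Ls.map fun M => M ++ [(-1 : ℤ)]).flatten).take t).sum) ∧
    (t < ((Ls.map fun M => M ++ [(-1 : ℤ)]).flatten).length →
      -(Ls.length : ℤ) < (((Ls.map fun M => M ++ [(-1 : ℤ)]).flatten).take t).sum) := by
  induction Ls with
  | nil => intro t; simp
  | cons x tl ih =>
    intro t
    have hx := h x (List.mem_cons_self)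
    have htl := ih (fun M hM => h M (List.mem_cons_of_mem _ hM))
    have hxl : (x ++ [(-1 : ℤ)]).length = x.length + 1 := by simp
    simp only [List.map_cons, List.flatten_cons]
    rw [List.take_append, List.sum_append, hxl, List.length_append, hxl,
      List.length_cons]
    rcases le_or_gt t x.length with hle | hlt
    · rw [List.take_append_of_le_length hle]
      have h0 : t - (x.length + 1) = 0 := by omega
      rw [h0]
      simp only [List.take_zero, List.sum_nil, add_zero]
      have := hx.2 t
      constructor
      · push_cast; omega
      · intro _; push_cast; omega
    · have hge : (x ++ [(-1 : ℤ)]).length ≤ t := by omega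
      rw [List.take_of_length_le hge]
      have hsb : (x ++ [(-1 : ℤ)]).sum = -1 := by simp [hx.1]
      rw [hsb]
      have h2 := htl (t - (x.length + 1))
      constructor
      · have := h2.1; push_cast at this ⊢; omega
      · intro hlen
        have := h2.2 (by omega)
        push_cast at this ⊢; omega

lemma B_sum_prefix (l : List (List ℤ)) (h : ∀ x ∈ l, x.sum = 0 ∧ ∀ j, 0 ≤ (x.take j).sum) :
    (List.intersperse [(0 : ℤ)] l).flatten.sum = 0 ∧
    ∀ j, 0 ≤ ((List.intersperse [(0 : ℤ)] l).flatten.take j).sum := by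
  induction l with
  | nil => simp
  | cons x tl ih =>
    cases tl with
    | nil =>
      simpa using h x (List.mem_cons_self)
    | cons y tl' =>
      have hx := h x (List.mem_cons_self)
      have ih' := ih (fun M hM => h M (List.mem_cons_of_mem _ hM))
      rw [List.intersperse_cons_cons]
      simp only [List.flatten_cons]
      constructor
      · rw [List.sum_append, List.sum_append, hx.1]
        simp [ih'.1]
      · intro j
        rw [List.take_append, List.sum_append]
        have h1 : 0 ≤ (List.take j x).sum := hx.2 j
        have h2 : 0 ≤ (List.take (j - x.length) ([(0:ℤ)] ++ (List.intersperse [(0:ℤ)] (y :: tl')).flatten)).sum := by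
          rw [List.take_append, List.sum_append]
          have h3 : 0 ≤ (List.take (j - x.length) [(0:ℤ)]).sum := by
            rcases j - x.length with _ | s <;> simp
          have h4 := ih'.2 (j - x.length - [(0:ℤ)].length)
          omega
        omega

lemma B_len (l : List (List ℤ)) (hne : l ≠ []) :
    (List.intersperse [(0 : ℤ)] l).flatten.length + 1 = (l.map List.length).sum + l.length := by
  induction l with
  | nil => simp at hne
  | cons x tl ih =>
    cases tl with
    | nil => simp
    | cons y tl' =>
      rw [List.intersperse_cons_cons]
      simp only [List.flatten_cons, List.length_append, List.map_cons, List.sum_cons,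
        List.length_cons]
      have := ih (by simp)
      simp at this ⊢
      omega

lemma B_count (l : List (List ℤ)) :
    (List.intersperse [(0 : ℤ)] l).flatten.count 1 = (l.map (List.count 1)).sum := by
  induction l with
  | nil => simp
  | cons x tl ih =>
    cases tl with
    | nil => simp
    | cons y tl' =>
      rw [List.intersperse_cons_cons]
      simp only [List.flatten_cons, List.count_append, List.map_cons, List.sum_cons]
      simp only [List.map_cons, List.sum_cons] at ih
      have : List.count (1:ℤ) [(0:ℤ)] = 0 := by decide
      omega


lemma psi_main (ψ : List ℤ → List ℤ) (hψ : PsiEquations ψ) :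
    ∀ (n : ℕ) (L : List ℤ), L.length ≤ n → IsLukas L →
    (ψ L).length = L.length ∧ (ψ L).sum = 0 ∧ (∀ j, 0 ≤ ((ψ L).take j).sum) ∧
    (∀ j : ℕ, (L[j]? = some 0 ∧ (L.take j).sum = 0) ↔
      ((ψ L)[j]? = some 0 ∧ ((ψ L).take j).sum = 0)) ∧
    (L.countP fun s => 1 ≤ s) = (ψ L).count 1 := by
  intro n
  induction n with
  | zero =>
    intro L hlen hL
    have : L = [] := by cases L with | nil => rfl | cons a b => simp at hlen
    subst this
    rw [hψ.1]
    simp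
  | succ n ih =>
    intro L hlen hL
    cases L with
    | nil => rw [hψ.1]; simp
    | cons k w =>
      have hwmem : ∀ s ∈ w, -1 ≤ s := fun s hs => hL.1 s (List.mem_cons_of_mem _ hs)
      have hk0 : 0 ≤ k := by have := hL.2.1 1; simpa using this
      have hwlen : w.length ≤ n := by simp at hlen; omega
      have hwtake : ∀ j, -k ≤ (w.take j).sum := by
        intro j
        have := hL.2.1 (j + 1)
        rw [List.take_succ_cons, List.sum_cons] at this
        omega
      have hwsum : w.sum = -k := by
        have := hL.2.2
        rw [List.sum_cons] at this
        omega
      rcases eq_or_lt_of_le hk0 with hk | hk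
      · -- flat step case, k = 0
        subst hk
        have hw : IsLukas w := ⟨hwmem, fun j => by have := hwtake j; omega, by omega⟩
        rw [hψ.2.1 w hw]
        obtain ⟨ihlen, ihsum, ihpre, ihiff, ihcnt⟩ := ih w hwlen hw
        refine ⟨by simp [ihlen], by simp [ihsum], ?_, ?_, ?_⟩
        · intro j
          cases j with
          | zero => simp
          | succ j' =>
            rw [List.take_succ_cons, List.sum_cons]
            have := ihpre j'
            omega
        · intro j
          cases j with
          | zero => simp
          | succ j' =>
            rw [List.getElem?_cons_succ, List.getElem?_cons_succ, List.take_succ_cons,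
              List.take_succ_cons, List.sum_cons, List.sum_cons, zero_add, zero_add]
            exact ihiff j'
        · rw [List.countP_cons, List.count_cons]
          simp [ihcnt]
      · -- up step case, 1 ≤ k
        obtain ⟨Ls, L₀, hLslen, hmem, hL₀, heqw⟩ := lukas_decomp k.toNat w hwmem
          (by intro j; rw [Int.toNat_of_nonneg hk0]; exact hwtake j)
          (by rw [Int.toNat_of_nonneg hk0]; exact hwsum)
        set A := (Ls.map fun M => M ++ [(-1 : ℤ)]).flatten with hAdef
        set B := (List.intersperse [(0 : ℤ)] (Ls.map ψ)).flatten with hBdef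
        have hkcast : (Ls.length : ℤ) = k := by
          rw [hLslen]; exact Int.toNat_of_nonneg hk0
        have hne : Ls ≠ [] := by
          intro h; rw [h] at hLslen; simp at hLslen; omega
        have heqL : (k :: w : List ℤ) = (Ls.length : ℤ) :: (A ++ L₀) := by
          rw [hkcast, heqw]
        have hpsi : ψ (k :: w) = 1 :: (B ++ (-1 : ℤ) :: ψ L₀) := by
          rw [heqL]; exact hψ.2.2 Ls L₀ hne hmem hL₀
        have hAw : A.length ≤ w.length := by rw [heqw]; simp
        have hMbound : ∀ M ∈ Ls, M.length ≤ n := by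
          intro M hM
          have hsub : (M ++ [(-1 : ℤ)]).Sublist A :=
            List.sublist_flatten_of_mem (List.mem_map_of_mem hM)
          have := hsub.length_le
          simp at this
          omega
        have IHM := fun M hM => ih M (hMbound M hM) (hmem M hM)
        have IHL₀ := ih L₀ (by
          have : L₀.length ≤ w.length := by rw [heqw]; simp
          omega) hL₀
        have hBsp : B.sum = 0 ∧ ∀ j, 0 ≤ ((B.take j)).sum := B_sum_prefix (Ls.map ψ) (by
          intro x hx
          obtain ⟨M, hM, rfl⟩ := List.mem_map.mp hx
          exact ⟨(IHM M hM).2.1, (IHM M hM).2.2.1⟩)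
        have hmapeq : (Ls.map ψ).map List.length = Ls.map List.length := by
          rw [List.map_map]
          exact List.map_congr_left (fun M hM => (IHM M hM).1)
        have hBlen : B.length + 1 = (Ls.map List.length).sum + Ls.length := by
          rw [hBdef, B_len (Ls.map ψ) (by simpa using hne), hmapeq, List.length_map]
        have hAlen : A.length = (Ls.map List.length).sum + Ls.length := A_len Ls
        have hAB : A.length = B.length + 1 := by omega
        have hAsum : A.sum = -(Ls.length : ℤ) := A_sum Ls (fun M hM => (hmem M hM).2.2)
        have hApre : ∀ t, (-(Ls.length : ℤ) ≤ ((A.take t)).sum) ∧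
            (t < A.length → -(Ls.length : ℤ) < ((A.take t)).sum) := A_prefix Ls (fun M hM => ⟨(hmem M hM).2.2, (hmem M hM).2.1⟩)
        have hLs1 : 1 ≤ Ls.length := by
          cases Ls with | nil => exact absurd rfl hne | cons a b => simp
        refine ⟨?_, ?_, ?_, ?_, ?_⟩
        · -- length
          rw [hpsi, heqL]
          simp only [List.length_cons, List.length_append]
          rw [IHL₀.1]
          omega
        · -- sum
          rw [hpsi]
          simp only [List.sum_cons, List.sum_append]
          rw [hBsp.1, IHL₀.2.1]
          ring
        · -- prefix sums
          intro j
          cases j with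
          | zero => simp
          | succ j' =>
            rw [hpsi, List.take_succ_cons, List.sum_cons, List.take_append,
              List.sum_append]
            have hb := hBsp.2 j'
            rcases hnat : j' - B.length with _ | s
            · simp
              omega
            · rw [List.take_succ_cons, List.sum_cons]
              have := IHL₀.2.2.1 s
              omega
        · -- flats iff
          intro j
          cases j with
          | zero =>
            apply iff_of_false
            · rintro ⟨h0, -⟩
              rw [heqL] at h0
              simp only [List.getElem?_cons_zero, Option.some.injEq] at h0
              omega
            · rintro ⟨h0, -⟩
              rw [hpsi] at h0
              simp at h0
          | succ j' =>
            rcases lt_or_ge j' A.length with hj | hj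
            · apply iff_of_false
              · rintro ⟨-, hsum⟩
                rw [heqL, List.take_succ_cons, List.sum_cons, List.take_append,
                  Nat.sub_eq_zero_of_le (le_of_lt hj), List.take_zero, List.append_nil] at hsum
                have := (hApre j').2 hj
                omega
              · rcases lt_or_eq_of_le (by omega : j' ≤ B.length) with hjB | hjB
                · rintro ⟨-, hsum⟩
                  rw [hpsi, List.take_succ_cons, List.sum_cons, List.take_append,
                    Nat.sub_eq_zero_of_le (le_of_lt hjB), List.take_zero, List.append_nil] at hsum
                  have := hBsp.2 j'
                  omega
                · rintro ⟨hget, -⟩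
                  rw [hpsi, List.getElem?_cons_succ,
                    List.getElem?_append_right (le_of_eq hjB.symm)] at hget
                  rw [← hjB] at hget
                  simp at hget
            · have ht : j' = A.length + (j' - A.length) := by omega
              set t := j' - A.length with htdef
              have e1 : (k :: w : List ℤ)[j' + 1]? = L₀[t]? := by
                rw [heqL, List.getElem?_cons_succ,
                  List.getElem?_append_right hj]
              have e2 : ((k :: w : List ℤ).take (j' + 1)).sum = (L₀.take t).sum := by
                rw [heqL, List.take_succ_cons, List.sum_cons, List.take_append,
                  List.take_of_length_le hj, List.sum_append, hAsum]
                ring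
              have e3 : (ψ (k :: w))[j' + 1]? = (ψ L₀)[t]? := by
                rw [hpsi, List.getElem?_cons_succ,
                  List.getElem?_append_right (by omega : B.length ≤ j')]
                have : j' - B.length = t + 1 := by omega
                rw [this, List.getElem?_cons_succ]
              have e4 : ((ψ (k :: w)).take (j' + 1)).sum = ((ψ L₀).take t).sum := by
                rw [hpsi, List.take_succ_cons, List.sum_cons, List.take_append,
                  List.take_of_length_le (by omega : B.length ≤ j'), List.sum_append, hBsp.1]
                have : j' - B.length = t + 1 := by omega
                rw [this, List.take_succ_cons, List.sum_cons]
                ring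
              rw [e1, e2, e3, e4]
              exact IHL₀.2.2.2.1 t
        · -- counts
          rw [hpsi, heqL]
          rw [List.countP_cons, List.countP_append, List.count_cons, List.count_append,
            List.count_cons]
          have hhead : (decide (1 ≤ (Ls.length : ℤ)) : Bool) = true := by
            simp
            exact hLs1
          have hAc : A.countP (fun s => 1 ≤ s) = (Ls.map (List.countP fun s => 1 ≤ s)).sum :=
            A_countP Ls
          have hBc : B.count 1 = ((Ls.map ψ).map (List.count 1)).sum := B_count (Ls.map ψ)
          have hsumeq : (Ls.map (List.countP fun s => 1 ≤ s)).sum =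
              ((Ls.map ψ).map (List.count 1)).sum := by
            rw [List.map_map]
            exact congrArg List.sum (List.map_congr_left (fun M hM => (IHM M hM).2.2.2.2))
          rw [hAc, hBc] at *
          simp [hhead, IHL₀.2.2.2.2, hsumeq, hne, hLs1]

/-- Under `ψ`: flat steps at height `0` occur at the same positions in `L` and
`ψ L`, and the number of up steps (of any size `k ≥ 1`) in `L` equals the number
of up steps `U` in `ψ L`. -/
theorem psi_flats_and_ups (ψ : List ℤ → List ℤ) (hψ : PsiEquations ψ)
    (L : List ℤ) (hL : IsLukas L) :
    (∀ j : ℕ, (L[j]? = some 0 ∧ (L.take j).sum = 0) ↔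
      ((ψ L)[j]? = some 0 ∧ ((ψ L).take j).sum = 0)) ∧
    (L.countP fun s => 1 ≤ s) = (ψ L).count 1 := by
  obtain ⟨-, -, -, h1, h2⟩ := psi_main ψ hψ L.length L le_rfl hL
  exact ⟨h1, h2⟩
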